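/- Let V be a complex vector space with a Virasoro representation of central charge c = −22/5 and a Shapovalov-compatible bilinear form B, and let w ∈ V be a (2,5)-model lowest-weight vector: L_n w = 0 for all n ≤ −1, L₀w = −(1/5)·w, and the null-vector relations (2L₂ − 5L₁L₁)w = 0 and (L₃ − 5L₂L₁)w = 0 hold. Then the vector ψ := (4·L₁L₅ + 3·L₃L₃ − (684/35)·L₆)w is quasi-primary, i.e. L₋₁ψ = 0, and B(ψ, ψ) = (6539268/6125)·B(w, w). -/
import Mathlib


/-- for a `(2,5)`-model lowest-weight vector `w` (weight `−1/5`,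
null relations `(2L₂ − 5L₁L₁)w = 0` and `(L₃ − 5L₂L₁)w = 0`), the vector
`ψ = (4L₁L₅ + 3L₃L₃ − (684/35)L₆)w` is quasi-primary and
`B(ψ, ψ) = (6539268/6125)·B(w, w)`. -/
theorem quasiprimary_weight_six_W_norm
    (V : Type*) [AddCommGroup V] [Module ℂ V]
    (c : ℂ) (hc : c = -22/5) (L : ℤ → Module.End ℂ V)
    (hL : ∀ (n m : ℤ) (x : V), L n (L m x) - L m (L n x) =
      ((m : ℂ) - (n : ℂ)) • L (m + n) x +
        (if m + n = 0 then c / 12 * (m : ℂ) * ((m : ℂ) ^ 2 - 1) else 0) • x)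
    (B : V →ₗ[ℂ] V →ₗ[ℂ] ℂ)
    (hB : ∀ (n : ℤ) (x y : V), B (L n x) y = B x (L (-n) y))
    (w : V) (hw : ∀ n : ℤ, n ≤ -1 → L n w = 0)
    (hw0 : L 0 w = (-(1/5) : ℂ) • w)
    (hnull1 : (2 : ℂ) • L 2 w - (5 : ℂ) • L 1 (L 1 w) = 0)
    (hnull2 : L 3 w - (5 : ℂ) • L 2 (L 1 w) = 0)
    (ψ : V)
    (hψ : ψ = (4 : ℂ) • L 1 (L 5 w) + (3 : ℂ) • L 3 (L 3 w) - (684/35 : ℂ) • L 6 w) :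
    L (-1) ψ = 0 ∧ B ψ ψ = (6539268/6125 : ℂ) * B w w := by
  subst hc; subst hψ
  have h_1_5 : L (1) (L (5) (w)) = (4 : ℂ) • L (6) (w) + (1 : ℂ) • L (5) (L (1) (w)) := by
    have e := sub_eq_iff_eq_add'.mp (hL (1) (5) (w))
    norm_num at e
    try simp only [map_add, map_smul, map_zero, smul_zero, add_zero, zero_add] at e
    rw [e]; try module
  have h_m1 : L (-1) w = (0 : V) := hw (-1) (by norm_num)
  have h_0 : L (0) w = (-1/5 : ℂ) • w := by rw [hw0]; module
  have h_m1_1 : L (-1) (L (1) (w)) = (-2/5 : ℂ) • w := by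
    have e := sub_eq_iff_eq_add'.mp (hL (-1) (1) (w))
    norm_num at e
    rw [h_m1, h_0] at e
    try simp only [map_add, map_smul, map_zero, smul_zero, add_zero, zero_add] at e
    rw [e]; try module
  have h_m1_5_1 : L (-1) (L (5) (L (1) (w))) = (-2/5 : ℂ) • L (5) (w) + (6 : ℂ) • L (4) (L (1) (w)) := by
    have e := sub_eq_iff_eq_add'.mp (hL (-1) (5) (L (1) (w)))
    norm_num at e
    rw [h_m1_1] at e
    try simp only [map_add, map_smul, map_zero, smul_zero, add_zero, zero_add] at e
    rw [e]; try module
  have h_m1_6 : L (-1) (L (6) (w)) = (7 : ℂ) • L (5) (w) := by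
    have e := sub_eq_iff_eq_add'.mp (hL (-1) (6) (w))
    norm_num at e
    rw [h_m1] at e
    try simp only [map_add, map_smul, map_zero, smul_zero, add_zero, zero_add] at e
    rw [e]; try module
  have h_m1_1_5 : L (-1) (L (1) (L (5) (w))) = (138/5 : ℂ) • L (5) (w) + (6 : ℂ) • L (4) (L (1) (w)) := by
    rw [h_1_5]
    try simp only [map_add, map_smul, map_zero, smul_zero, add_zero, zero_add]
    rw [h_m1_5_1, h_m1_6]
    try module
  have h_m1_3 : L (-1) (L (3) (w)) = (4 : ℂ) • L (2) (w) := by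
    have e := sub_eq_iff_eq_add'.mp (hL (-1) (3) (w))
    norm_num at e
    rw [h_m1] at e
    try simp only [map_add, map_smul, map_zero, smul_zero, add_zero, zero_add] at e
    rw [e]; try module
  have h_2_3 : L (2) (L (3) (w)) = (1 : ℂ) • L (5) (w) + (1 : ℂ) • L (3) (L (2) (w)) := by
    have e := sub_eq_iff_eq_add'.mp (hL (2) (3) (w))
    norm_num at e
    try simp only [map_add, map_smul, map_zero, smul_zero, add_zero, zero_add] at e
    rw [e]; try module
  have h_m1_3_3 : L (-1) (L (3) (L (3) (w))) = (4 : ℂ) • L (5) (w) + (8 : ℂ) • L (3) (L (2) (w)) := by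
    have e := sub_eq_iff_eq_add'.mp (hL (-1) (3) (L (3) (w)))
    norm_num at e
    rw [h_m1_3, h_2_3] at e
    try simp only [map_add, map_smul, map_zero, smul_zero, add_zero, zero_add] at e
    rw [e]; try module
  have h_1_2 : L (1) (L (2) (w)) = (1 : ℂ) • L (3) (w) + (1 : ℂ) • L (2) (L (1) (w)) := by
    have e := sub_eq_iff_eq_add'.mp (hL (1) (2) (w))
    norm_num at e
    try simp only [map_add, map_smul, map_zero, smul_zero, add_zero, zero_add] at e
    rw [e]; try module
  have h_2_1_2 : L (2) (L (1) (L (2) (w))) = (1 : ℂ) • L (5) (w) + (1 : ℂ) • L (3) (L (2) (w)) + (1 : ℂ) • L (2) (L (2) (L (1) (w))) := by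
    rw [h_1_2]
    try simp only [map_add, map_smul, map_zero, smul_zero, add_zero, zero_add]
    rw [h_2_3]
    try module
  have h_1_3 : L (1) (L (3) (w)) = (2 : ℂ) • L (4) (w) + (1 : ℂ) • L (3) (L (1) (w)) := by
    have e := sub_eq_iff_eq_add'.mp (hL (1) (3) (w))
    norm_num at e
    try simp only [map_add, map_smul, map_zero, smul_zero, add_zero, zero_add] at e
    rw [e]; try module
  have h_1_3_1 : L (1) (L (3) (L (1) (w))) = (2 : ℂ) • L (4) (L (1) (w)) + (1 : ℂ) • L (3) (L (1) (L (1) (w))) := by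
    have e := sub_eq_iff_eq_add'.mp (hL (1) (3) (L (1) (w)))
    norm_num at e
    try simp only [map_add, map_smul, map_zero, smul_zero, add_zero, zero_add] at e
    rw [e]; try module
  have h_1_4 : L (1) (L (4) (w)) = (3 : ℂ) • L (5) (w) + (1 : ℂ) • L (4) (L (1) (w)) := by
    have e := sub_eq_iff_eq_add'.mp (hL (1) (4) (w))
    norm_num at e
    try simp only [map_add, map_smul, map_zero, smul_zero, add_zero, zero_add] at e
    rw [e]; try module
  have h_1_1_3 : L (1) (L (1) (L (3) (w))) = (6 : ℂ) • L (5) (w) + (4 : ℂ) • L (4) (L (1) (w)) + (1 : ℂ) • L (3) (L (1) (L (1) (w))) := by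
    rw [h_1_3]
    try simp only [map_add, map_smul, map_zero, smul_zero, add_zero, zero_add]
    rw [h_1_3_1, h_1_4]
    try module
  have h_1_2_1 : L (1) (L (2) (L (1) (w))) = (1 : ℂ) • L (3) (L (1) (w)) + (1 : ℂ) • L (2) (L (1) (L (1) (w))) := by
    have e := sub_eq_iff_eq_add'.mp (hL (1) (2) (L (1) (w)))
    norm_num at e
    try simp only [map_add, map_smul, map_zero, smul_zero, add_zero, zero_add] at e
    rw [e]; try module
  have h_1_2_1_1 : L (1) (L (2) (L (1) (L (1) (w)))) = (1 : ℂ) • L (3) (L (1) (L (1) (w))) + (1 : ℂ) • L (2) (L (1) (L (1) (L (1) (w)))) := by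
    have e := sub_eq_iff_eq_add'.mp (hL (1) (2) (L (1) (L (1) (w))))
    norm_num at e
    try simp only [map_add, map_smul, map_zero, smul_zero, add_zero, zero_add] at e
    rw [e]; try module
  have h_1_1_2_1 : L (1) (L (1) (L (2) (L (1) (w)))) = (2 : ℂ) • L (4) (L (1) (w)) + (2 : ℂ) • L (3) (L (1) (L (1) (w))) + (1 : ℂ) • L (2) (L (1) (L (1) (L (1) (w)))) := by
    rw [h_1_2_1]
    try simp only [map_add, map_smul, map_zero, smul_zero, add_zero, zero_add]
    rw [h_1_2_1_1, h_1_3_1]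
    try module
  have h_m5 : L (-5) w = (0 : V) := hw (-5) (by norm_num)
  have h_m5_5 : L (-5) (L (5) (w)) = (-46 : ℂ) • w := by
    have e := sub_eq_iff_eq_add'.mp (hL (-5) (5) (w))
    norm_num at e
    rw [h_m5, h_0] at e
    try simp only [map_add, map_smul, map_zero, smul_zero, add_zero, zero_add] at e
    rw [e]; try module
  have h_m4 : L (-4) w = (0 : V) := hw (-4) (by norm_num)
  have h_m5_1 : L (-5) (L (1) (w)) = (0 : V) := by
    have e := sub_eq_iff_eq_add'.mp (hL (-5) (1) (w))
    norm_num at e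
    rw [h_m5, h_m4] at e
    try simp only [map_add, map_smul, map_zero, smul_zero, add_zero, zero_add] at e
    rw [e]; try module
  have h_m5_4_1 : L (-5) (L (4) (L (1) (w))) = (-18/5 : ℂ) • w := by
    have e := sub_eq_iff_eq_add'.mp (hL (-5) (4) (L (1) (w)))
    norm_num at e
    rw [h_m5_1, h_m1_1] at e
    try simp only [map_add, map_smul, map_zero, smul_zero, add_zero, zero_add] at e
    rw [e]; try module
  have h_m5_m1_1_5 : L (-5) (L (-1) (L (1) (L (5) (w)))) = (-6456/5 : ℂ) • w := by
    rw [h_m1_1_5]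
    try simp only [map_add, map_smul, map_zero, smul_zero, add_zero, zero_add]
    rw [h_m5_5, h_m5_4_1]
    try module
  have h_m3 : L (-3) w = (0 : V) := hw (-3) (by norm_num)
  have h_m5_2 : L (-5) (L (2) (w)) = (0 : V) := by
    have e := sub_eq_iff_eq_add'.mp (hL (-5) (2) (w))
    norm_num at e
    rw [h_m5, h_m3] at e
    try simp only [map_add, map_smul, map_zero, smul_zero, add_zero, zero_add] at e
    rw [e]; try module
  have h_m2 : L (-2) w = (0 : V) := hw (-2) (by norm_num)
  have h_m2_2 : L (-2) (L (2) (w)) = (-3 : ℂ) • w := by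
    have e := sub_eq_iff_eq_add'.mp (hL (-2) (2) (w))
    norm_num at e
    rw [h_m2, h_0] at e
    try simp only [map_add, map_smul, map_zero, smul_zero, add_zero, zero_add] at e
    rw [e]; try module
  have h_m5_3_2 : L (-5) (L (3) (L (2) (w))) = (-24 : ℂ) • w := by
    have e := sub_eq_iff_eq_add'.mp (hL (-5) (3) (L (2) (w)))
    norm_num at e
    rw [h_m5_2, h_m2_2] at e
    try simp only [map_add, map_smul, map_zero, smul_zero, add_zero, zero_add] at e
    rw [e]; try module
  have h_m5_m1_3_3 : L (-5) (L (-1) (L (3) (L (3) (w)))) = (-376 : ℂ) • w := by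
    rw [h_m1_3_3]
    try simp only [map_add, map_smul, map_zero, smul_zero, add_zero, zero_add]
    rw [h_m5_3_2, h_m5_5]
    try module
  have h_m5_m1_6 : L (-5) (L (-1) (L (6) (w))) = (-322 : ℂ) • w := by
    rw [h_m1_6]
    try simp only [map_add, map_smul, map_zero, smul_zero, add_zero, zero_add]
    rw [h_m5_5]
    try module
  have h_m3_1 : L (-3) (L (1) (w)) = (0 : V) := by
    have e := sub_eq_iff_eq_add'.mp (hL (-3) (1) (w))
    norm_num at e
    rw [h_m3, h_m2] at e
    try simp only [map_add, map_smul, map_zero, smul_zero, add_zero, zero_add] at e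
    rw [e]; try module
  have h_m3_5_1 : L (-3) (L (5) (L (1) (w))) = (8 : ℂ) • L (2) (L (1) (w)) := by
    have e := sub_eq_iff_eq_add'.mp (hL (-3) (5) (L (1) (w)))
    norm_num at e
    rw [h_m3_1] at e
    try simp only [map_add, map_smul, map_zero, smul_zero, add_zero, zero_add] at e
    rw [e]; try module
  have h_m3_6 : L (-3) (L (6) (w)) = (9 : ℂ) • L (3) (w) := by
    have e := sub_eq_iff_eq_add'.mp (hL (-3) (6) (w))
    norm_num at e
    rw [h_m3] at e
    try simp only [map_add, map_smul, map_zero, smul_zero, add_zero, zero_add] at e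
    rw [e]; try module
  have h_m3_1_5 : L (-3) (L (1) (L (5) (w))) = (36 : ℂ) • L (3) (w) + (8 : ℂ) • L (2) (L (1) (w)) := by
    rw [h_1_5]
    try simp only [map_add, map_smul, map_zero, smul_zero, add_zero, zero_add]
    rw [h_m3_5_1, h_m3_6]
    try module
  have h_m3_2_1 : L (-3) (L (2) (L (1) (w))) = (-2 : ℂ) • w := by
    have e := sub_eq_iff_eq_add'.mp (hL (-3) (2) (L (1) (w)))
    norm_num at e
    rw [h_m3_1, h_m1_1] at e
    try simp only [map_add, map_smul, map_zero, smul_zero, add_zero, zero_add] at e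
    rw [e]; try module
  have h_m3_3 : L (-3) (L (3) (w)) = (-10 : ℂ) • w := by
    have e := sub_eq_iff_eq_add'.mp (hL (-3) (3) (w))
    norm_num at e
    rw [h_m3, h_0] at e
    try simp only [map_add, map_smul, map_zero, smul_zero, add_zero, zero_add] at e
    rw [e]; try module
  have h_m3_m3_1_5 : L (-3) (L (-3) (L (1) (L (5) (w)))) = (-376 : ℂ) • w := by
    rw [h_m3_1_5]
    try simp only [map_add, map_smul, map_zero, smul_zero, add_zero, zero_add]
    rw [h_m3_2_1, h_m3_3]
    try module
  have h_0_3 : L (0) (L (3) (w)) = (14/5 : ℂ) • L (3) (w) := by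
    have e := sub_eq_iff_eq_add'.mp (hL (0) (3) (w))
    norm_num at e
    rw [h_0] at e
    try simp only [map_add, map_smul, map_zero, smul_zero, add_zero, zero_add] at e
    rw [e]; try module
  have h_m3_3_3 : L (-3) (L (3) (L (3) (w))) = (-2 : ℂ) • L (3) (w) := by
    have e := sub_eq_iff_eq_add'.mp (hL (-3) (3) (L (3) (w)))
    norm_num at e
    rw [h_m3_3, h_0_3] at e
    try simp only [map_add, map_smul, map_zero, smul_zero, add_zero, zero_add] at e
    rw [e]; try module
  have h_m3_m3_3_3 : L (-3) (L (-3) (L (3) (L (3) (w)))) = (20 : ℂ) • w := by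
    rw [h_m3_3_3]
    try simp only [map_add, map_smul, map_zero, smul_zero, add_zero, zero_add]
    rw [h_m3_3]
    try module
  have h_m3_m3_6 : L (-3) (L (-3) (L (6) (w))) = (-90 : ℂ) • w := by
    rw [h_m3_6]
    try simp only [map_add, map_smul, map_zero, smul_zero, add_zero, zero_add]
    rw [h_m3_3]
    try module
  have h_m6 : L (-6) w = (0 : V) := hw (-6) (by norm_num)
  have h_m6_1 : L (-6) (L (1) (w)) = (0 : V) := by
    have e := sub_eq_iff_eq_add'.mp (hL (-6) (1) (w))
    norm_num at e
    rw [h_m6, h_m5] at e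
    try simp only [map_add, map_smul, map_zero, smul_zero, add_zero, zero_add] at e
    rw [e]; try module
  have h_m6_5_1 : L (-6) (L (5) (L (1) (w))) = (-22/5 : ℂ) • w := by
    have e := sub_eq_iff_eq_add'.mp (hL (-6) (5) (L (1) (w)))
    norm_num at e
    rw [h_m6_1, h_m1_1] at e
    try simp only [map_add, map_smul, map_zero, smul_zero, add_zero, zero_add] at e
    rw [e]; try module
  have h_m6_6 : L (-6) (L (6) (w)) = (-397/5 : ℂ) • w := by
    have e := sub_eq_iff_eq_add'.mp (hL (-6) (6) (w))
    norm_num at e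
    rw [h_m6, h_0] at e
    try simp only [map_add, map_smul, map_zero, smul_zero, add_zero, zero_add] at e
    rw [e]; try module
  have h_m6_1_5 : L (-6) (L (1) (L (5) (w))) = (-322 : ℂ) • w := by
    rw [h_1_5]
    try simp only [map_add, map_smul, map_zero, smul_zero, add_zero, zero_add]
    rw [h_m6_5_1, h_m6_6]
    try module
  have h_m6_3 : L (-6) (L (3) (w)) = (0 : V) := by
    have e := sub_eq_iff_eq_add'.mp (hL (-6) (3) (w))
    norm_num at e
    rw [h_m6, h_m3] at e
    try simp only [map_add, map_smul, map_zero, smul_zero, add_zero, zero_add] at e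
    rw [e]; try module
  have h_m6_3_3 : L (-6) (L (3) (L (3) (w))) = (-90 : ℂ) • w := by
    have e := sub_eq_iff_eq_add'.mp (hL (-6) (3) (L (3) (w)))
    norm_num at e
    rw [h_m6_3, h_m3_3] at e
    try simp only [map_add, map_smul, map_zero, smul_zero, add_zero, zero_add] at e
    rw [e]; try module
  have r1 := congrArg (L 3) hnull1
  have r2 := congrArg (fun v => L 2 (L 1 v)) hnull1
  have r3 := congrArg (L 2) hnull2
  have r4 := congrArg (fun v => L 1 (L 1 v)) hnull2
  simp only [map_sub, map_smul, map_zero] at r1 r2 r3 r4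
  rw [h_2_1_2] at r2
  rw [h_2_3] at r3
  rw [h_1_1_3, h_1_1_2_1] at r4
  constructor
  · simp only [map_add, map_sub, map_smul]
    rw [h_m1_1_5, h_m1_3_3, h_m1_6]
    linear_combination (norm := module) (36/5 : ℂ) • r1 + (4 : ℂ) • r2 + (8/5 : ℂ) • r3 + (-4 : ℂ) • r4
  have hB_a15_a15 : B (L (1) (L (5) (w))) (L (1) (L (5) (w))) = (-6456/5 : ℂ) * B w w := by
    rw [hB (1) (L (5) (w)) (L (1) (L (5) (w))), hB (5) w (L (-1) (L (1) (L (5) (w)))), h_m5_m1_1_5, map_smul, smul_eq_mul]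
  have hB_a15_a33 : B (L (1) (L (5) (w))) (L (3) (L (3) (w))) = (-376 : ℂ) * B w w := by
    rw [hB (1) (L (5) (w)) (L (3) (L (3) (w))), hB (5) w (L (-1) (L (3) (L (3) (w)))), h_m5_m1_3_3, map_smul, smul_eq_mul]
  have hB_a15_a6 : B (L (1) (L (5) (w))) (L (6) (w)) = (-322 : ℂ) * B w w := by
    rw [hB (1) (L (5) (w)) (L (6) (w)), hB (5) w (L (-1) (L (6) (w))), h_m5_m1_6, map_smul, smul_eq_mul]
  have hB_a33_a15 : B (L (3) (L (3) (w))) (L (1) (L (5) (w))) = (-376 : ℂ) * B w w := by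
    rw [hB (3) (L (3) (w)) (L (1) (L (5) (w))), hB (3) w (L (-3) (L (1) (L (5) (w)))), h_m3_m3_1_5, map_smul, smul_eq_mul]
  have hB_a33_a33 : B (L (3) (L (3) (w))) (L (3) (L (3) (w))) = (20 : ℂ) * B w w := by
    rw [hB (3) (L (3) (w)) (L (3) (L (3) (w))), hB (3) w (L (-3) (L (3) (L (3) (w)))), h_m3_m3_3_3, map_smul, smul_eq_mul]
  have hB_a33_a6 : B (L (3) (L (3) (w))) (L (6) (w)) = (-90 : ℂ) * B w w := by
    rw [hB (3) (L (3) (w)) (L (6) (w)), hB (3) w (L (-3) (L (6) (w))), h_m3_m3_6, map_smul, smul_eq_mul]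
  have hB_a6_a15 : B (L (6) (w)) (L (1) (L (5) (w))) = (-322 : ℂ) * B w w := by
    rw [hB (6) w (L (1) (L (5) (w))), h_m6_1_5, map_smul, smul_eq_mul]
  have hB_a6_a33 : B (L (6) (w)) (L (3) (L (3) (w))) = (-90 : ℂ) * B w w := by
    rw [hB (6) w (L (3) (L (3) (w))), h_m6_3_3, map_smul, smul_eq_mul]
  have hB_a6_a6 : B (L (6) (w)) (L (6) (w)) = (-397/5 : ℂ) * B w w := by
    rw [hB (6) w (L (6) (w)), h_m6_6, map_smul, smul_eq_mul]
  · simp only [map_add, map_sub, map_smul, LinearMap.add_apply, LinearMap.sub_apply,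
      LinearMap.smul_apply, smul_eq_mul]
    rw [hB_a15_a15, hB_a15_a33, hB_a15_a6, hB_a33_a15, hB_a33_a33, hB_a33_a6, hB_a6_a15, hB_a6_a33, hB_a6_a6]
    ring
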